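/- Suppose the 2n×2n symplectic matrices S_k(λ) (k = 0,…,N) satisfy Ψ(S_k(λ)) ≥ 0 for all λ, and Z_{N+1}(λ) is a differentiable symplectic family with Ψ(Z_{N+1}(λ)) ≤ 0 for all λ. Define Z_k(λ) := S_k(λ)⁻¹ Z_{k+1}(λ) for k = N,…,0. Then Ψ(Z_k(λ)) ≤ 0 for all λ and all k = 0,…,N+1. -/

import Mathlib

open Matrix
noncomputable section

/-- The standard symplectic matrix `J = [[0, I], [-I, 0]]`. -/
def Jmat (k : Type*) [Fintype k] [DecidableEq k] : Matrix (k ⊕ k) (k ⊕ k) ℝ :=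
  fromBlocks 0 1 (-1) 0

/-- A matrix `S` is symplectic if `Sᵀ J S = J`. -/
def IsSymplectic {k : Type*} [Fintype k] [DecidableEq k]
    (S : Matrix (k ⊕ k) (k ⊕ k) ℝ) : Prop :=
  Sᵀ * Jmat k * S = Jmat k

/-- `S'` is the (entrywise) derivative family of the matrix family `S`. -/
def HasMatDeriv {k m : Type*} (S S' : ℝ → Matrix k m ℝ) : Prop :=
  ∀ (l : ℝ) (i : k) (j : m), HasDerivAt (fun t => S t i j) (S' l i j) l

/-- `Ψ(S(λ)) = Jᵀ S'(λ) S(λ)⁻¹`, where `S'` is a derivative family of `S`. -/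
def Psi {k : Type*} [Fintype k] [DecidableEq k]
    (S S' : ℝ → Matrix (k ⊕ k) (k ⊕ k) ℝ) (l : ℝ) : Matrix (k ⊕ k) (k ⊕ k) ℝ :=
  (Jmat k)ᵀ * S' l * (S l)⁻¹

set_option linter.unusedSectionVars false

namespace Aux
variable {k : Type*} [Fintype k] [DecidableEq k]

local notation "J" => Jmat k
local notation "MM" => Matrix (k ⊕ k) (k ⊕ k) ℝ

lemma J_mul_J : J * J = -1 := by
  rw [Jmat, fromBlocks_multiply, ← fromBlocks_one, ← neg_neg (fromBlocks 1 0 0 1),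
    fromBlocks_neg]
  simp

lemma J_transpose : (J)ᵀ = -J := by
  rw [Jmat, fromBlocks_transpose, fromBlocks_neg]
  simp

/-- the explicit inverse of a symplectic matrix -/
def si (S : MM) : MM := -(J * Sᵀ * J)

lemma symp_left_inv {S : MM} (h : IsSymplectic S) : si S * S = 1 := by
  calc si S * S = -(J * (Sᵀ * J * S)) := by rw [si]; noncomm_ring
    _ = -(J * J) := by rw [h]
    _ = 1 := by rw [J_mul_J]; simp

lemma symp_right_inv {S : MM} (h : IsSymplectic S) : S * si S = 1 :=
  mul_eq_one_comm.mp (symp_left_inv h)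

lemma symp_inv_eq {S : MM} (h : IsSymplectic S) : S⁻¹ = si S :=
  inv_eq_left_inv (symp_left_inv h)

lemma symp_mul {A B : MM} (hA : IsSymplectic A) (hB : IsSymplectic B) :
    IsSymplectic (A * B) := by
  unfold IsSymplectic at *
  rw [transpose_mul]
  calc Bᵀ * Aᵀ * J * (A * B) = Bᵀ * (Aᵀ * J * A) * B := by noncomm_ring
    _ = J := by rw [hA, hB]

lemma symp_other {S : MM} (h : IsSymplectic S) : S * J * Sᵀ = J := by
  have h1 := symp_right_inv h
  have h2 : S * J * Sᵀ * (J * J) = -(S * si S) * J := by rw [si]; noncomm_ring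
  rw [J_mul_J, h1] at h2
  simp only [mul_neg_one, neg_mul, one_mul, neg_inj] at h2
  exact h2

lemma symp_inv {S : MM} (h : IsSymplectic S) : IsSymplectic S⁻¹ := by
  rw [symp_inv_eq h]
  have hs := symp_other h
  have ht : (si S)ᵀ = -(J * S * J) := by
    simp [si, transpose_mul, J_transpose]; noncomm_ring
  show (si S)ᵀ * J * si S = J
  calc (si S)ᵀ * J * si S = J * S * (J * J) * (J * Sᵀ * J) := by
        rw [ht, si]; noncomm_ring
    _ = -(J * (S * J * Sᵀ) * J) := by rw [J_mul_J]; noncomm_ring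
    _ = -(J * J * J) := by rw [hs]
    _ = J := by rw [J_mul_J]; noncomm_ring


section deriv
variable {m p : Type*} [Fintype m] [Fintype p]

lemma matderiv_const {q : Type*} (C : Matrix m q ℝ) :
    HasMatDeriv (fun _ => C) (fun _ => 0) := by
  intro l i j
  simpa using hasDerivAt_const l (C i j)

lemma matderiv_mul {q : Type*} {A A' : ℝ → Matrix m p ℝ} {B B' : ℝ → Matrix p q ℝ}
    (hA : HasMatDeriv A A') (hB : HasMatDeriv B B') :
    HasMatDeriv (fun l => A l * B l) (fun l => A' l * B l + A l * B' l) := by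
  intro l i j
  have h : ∀ x ∈ Finset.univ, HasDerivAt (fun t => A t i x * B t x j)
      (A' l i x * B l x j + A l i x * B' l x j) l :=
    fun x _ => (hA l i x).mul (hB l x j)
  have := HasDerivAt.fun_sum h
  simpa [Matrix.mul_apply, Matrix.add_apply, Finset.sum_add_distrib] using this

lemma matderiv_transpose {A A' : ℝ → Matrix m p ℝ} (hA : HasMatDeriv A A') :
    HasMatDeriv (fun l => (A l)ᵀ) (fun l => (A' l)ᵀ) :=
  fun l i j => hA l j i

lemma matderiv_neg {A A' : ℝ → Matrix m p ℝ} (hA : HasMatDeriv A A') :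
    HasMatDeriv (fun l => -(A l)) (fun l => -(A' l)) := by
  intro l i j
  simpa using (hA l i j).fun_neg

lemma matderiv_congr_deriv {A A' A'' : ℝ → Matrix m p ℝ} (hA : HasMatDeriv A A')
    (h : ∀ l, A' l = A'' l) : HasMatDeriv A A'' := by
  intro l i j; rw [← h l]; exact hA l i j

lemma matderiv_unique {A A' A'' : ℝ → Matrix m p ℝ} (h1 : HasMatDeriv A A')
    (h2 : HasMatDeriv A A'') (l : ℝ) : A' l = A'' l :=
  Matrix.ext fun i j => (h1 l i j).unique (h2 l i j)

lemma matderiv_congr_fun {A B A' : ℝ → Matrix m p ℝ} (h : ∀ l, A l = B l)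
    (hA : HasMatDeriv A A') : HasMatDeriv B A' := by
  intro l i j
  have : (fun t => A t i j) = fun t => B t i j := funext fun t => by rw [h t]
  rw [← this]; exact hA l i j

end deriv

/-- differentiating the symplectic identity -/
lemma symp_deriv {S S' : ℝ → MM} (hS : ∀ l, IsSymplectic (S l))
    (hd : HasMatDeriv S S') (l : ℝ) :
    (S' l)ᵀ * J * S l + (S l)ᵀ * J * S' l = 0 := by
  have h1 : HasMatDeriv (fun l => (S l)ᵀ * J * S l)
      (fun l => ((S' l)ᵀ * J + ((S l)ᵀ * 0 : MM)) * S l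
        + ((S l)ᵀ * J) * S' l) :=
    matderiv_mul (matderiv_mul (matderiv_transpose hd) (matderiv_const J)) hd
  have h2 : HasMatDeriv (fun l => (S l)ᵀ * J * S l) (fun _ => (0 : MM)) :=
    matderiv_congr_fun (fun l => (hS l).symm) (matderiv_const J)
  have := matderiv_unique h1 h2 l
  simpa using this


/-- core algebraic step: `-Ψ(S⁻¹Z) = Sᵀ Ψ(S) S + Sᵀ (-Ψ(Z)) S`. -/
lemma key {S S' Z Z' : MM} (hS : IsSymplectic S) (hZ : IsSymplectic Z)
    (hd : S'ᵀ * J * S + Sᵀ * J * S' = 0)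
    (hSpos : ((J)ᵀ * S' * S⁻¹).PosSemidef)
    (hZneg : (-((J)ᵀ * Z' * Z⁻¹)).PosSemidef) :
    (-((J)ᵀ * ((-(J * S'ᵀ * J)) * Z + si S * Z') * (si S * Z)⁻¹)).PosSemidef := by
  have hsi : si S * S = 1 := symp_left_inv hS
  have hZ1 : Z * Z⁻¹ = 1 := by rw [symp_inv_eq hZ]; exact symp_right_inv hZ
  have hWinv : (si S * Z)⁻¹ = Z⁻¹ * S := by
    apply inv_eq_left_inv
    calc Z⁻¹ * S * (si S * Z) = Z⁻¹ * (S * si S) * Z := by noncomm_ring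
      _ = Z⁻¹ * Z := by rw [symp_right_inv hS]; noncomm_ring
      _ = 1 := by rw [symp_inv_eq hZ]; exact symp_left_inv hZ
  have hd' : S'ᵀ * J * S = -(Sᵀ * J * S') := eq_neg_of_add_eq_zero_left hd
  have eR : Sᵀ * ((J)ᵀ * S' * S⁻¹) * S + Sᵀ * (-((J)ᵀ * Z' * Z⁻¹)) * S
      = -(Sᵀ * J * S') + Sᵀ * J * Z' * Z⁻¹ * S := by
    rw [symp_inv_eq hS, J_transpose]
    have h1 : Sᵀ * (-J * S' * si S) * S = -(Sᵀ * J * (S' * (si S * S))) := by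
      noncomm_ring
    rw [h1, hsi]
    noncomm_ring
  have hmain : -((J)ᵀ * ((-(J * S'ᵀ * J)) * Z + si S * Z') * (si S * Z)⁻¹)
      = Sᵀ * ((J)ᵀ * S' * S⁻¹) * S + Sᵀ * (-((J)ᵀ * Z' * Z⁻¹)) * S := by
    rw [eR, hWinv]
    calc -((J)ᵀ * ((-(J * S'ᵀ * J)) * Z + si S * Z') * (Z⁻¹ * S))
        = -((J * J) * S'ᵀ * J * (Z * Z⁻¹) * S)
          + -((J * J) * Sᵀ * J * Z' * Z⁻¹ * S) := by
          rw [J_transpose, si]; noncomm_ring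
      _ = S'ᵀ * J * S + Sᵀ * J * Z' * Z⁻¹ * S := by
          rw [J_mul_J, hZ1]; noncomm_ring
      _ = -(Sᵀ * J * S') + Sᵀ * J * Z' * Z⁻¹ * S := by rw [hd']
  rw [hmain, show Sᵀ = Sᴴ from (conjTranspose_eq_transpose_of_trivial S).symm]
  exact (hSpos.conjTranspose_mul_mul_same S).add (hZneg.conjTranspose_mul_mul_same S)

end Aux

/-- if `Ψ(S_k(λ)) ≥ 0` for all `k, λ`, `Ψ(Z_{N+1}(λ)) ≤ 0`, and
`Z_k(λ) = S_k(λ)⁻¹ Z_{k+1}(λ)`, then `Ψ(Z_k(λ)) ≤ 0` for all `k = 0, …, N+1` and all `λ`. -/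
theorem statement8 (n N : ℕ)
    (S S' : Fin (N + 1) → ℝ → Matrix (Fin n ⊕ Fin n) (Fin n ⊕ Fin n) ℝ)
    (Z Z' : Fin (N + 2) → ℝ → Matrix (Fin n ⊕ Fin n) (Fin n ⊕ Fin n) ℝ)
    (hS : ∀ k l, IsSymplectic (S k l))
    (hdS : ∀ k, HasMatDeriv (S k) (S' k))
    (hSpos : ∀ k l, (Psi (S k) (S' k) l).PosSemidef)
    (hZlast : ∀ l, IsSymplectic (Z (Fin.last (N + 1)) l))
    (hdZ : ∀ k, HasMatDeriv (Z k) (Z' k))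
    (hZneg : ∀ l, (-(Psi (Z (Fin.last (N + 1))) (Z' (Fin.last (N + 1))) l)).PosSemidef)
    (hrec : ∀ (k : Fin (N + 1)) (l : ℝ), Z k.castSucc l = (S k l)⁻¹ * Z k.succ l) :
    ∀ (k : Fin (N + 2)) (l : ℝ), (-(Psi (Z k) (Z' k) l)).PosSemidef := by
  set J := Jmat (Fin n) with hJ
  suffices H : ∀ k : Fin (N + 2),
      (∀ l, IsSymplectic (Z k l)) ∧ ∀ l, (-(Psi (Z k) (Z' k) l)).PosSemidef from
    fun k l => (H k).2 l
  intro k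
  induction k using Fin.reverseInduction with
  | last => exact ⟨hZlast, hZneg⟩
  | cast i ih =>
    obtain ⟨ihsymp, ihpos⟩ := ih
    have hfun : ∀ l, Z i.castSucc l = Aux.si (S i l) * Z i.succ l := fun l => by
      rw [hrec i l, Aux.symp_inv_eq (hS i l)]
    have hsymp : ∀ l, IsSymplectic (Z i.castSucc l) := fun l => by
      rw [hrec i l]
      exact Aux.symp_mul (Aux.symp_inv (hS i l)) (ihsymp l)
    refine ⟨hsymp, fun l => ?_⟩
    have h1 : HasMatDeriv (fun l => Aux.si (S i l))
        (fun l => -(J * (S' i l)ᵀ * J)) := by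
      have h0 := Aux.matderiv_neg (Aux.matderiv_mul (Aux.matderiv_mul
        (Aux.matderiv_const J) (Aux.matderiv_transpose (hdS i))) (Aux.matderiv_const J))
      refine Aux.matderiv_congr_deriv h0 fun l => ?_
      simp
    have hdW : HasMatDeriv (Z i.castSucc)
        (fun l => (-(J * (S' i l)ᵀ * J)) * Z i.succ l
          + Aux.si (S i l) * Z' i.succ l) :=
      Aux.matderiv_congr_fun (fun l => (hfun l).symm)
        (Aux.matderiv_mul h1 (hdZ i.succ))
    have hW' : Z' i.castSucc l = (-(J * (S' i l)ᵀ * J)) * Z i.succ l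
        + Aux.si (S i l) * Z' i.succ l :=
      Aux.matderiv_unique (hdZ i.castSucc) hdW l
    show (-(Jᵀ * Z' i.castSucc l * (Z i.castSucc l)⁻¹)).PosSemidef
    rw [hW', hfun l]
    exact Aux.key (hS i l) (ihsymp l) (Aux.symp_deriv (hS i) (hdS i) l)
      (hSpos i l) (ihpos l)
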